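/- Let D be a triangulated category with a split-generator G, let T be an exact autoequivalence of D, and let E be an object of D with E ≇ 0 and T E ≅ E. Let t ∈ ℝ and assume δ_t(G,E) > 0 (this is automatic for t = 0, since δ_0(G,E) ≥ 1 whenever E ≇ 0). Then G ⊕ E is a split-generator of D and liminf_{n→∞} (1/n)·log δ_t(G, Tⁿ(G ⊕ E)) ≥ 0. (This is the content of Theorem 1.7(2): if Ker S R ≠ 0 for a spherical functor S, then the twist T_S fixes a nonzero object and h_t(T_S) ≥ 0.) -/

import Mathlib

open CategoryTheory CategoryTheory.Limits CategoryTheory.Pretriangulated Filter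
open scoped ENNReal

universe v₁ v₂ u₁ u₂

variable {D : Type u₁} [Category.{v₁} D] [Preadditive D] [HasZeroObject D]
  [HasShift D ℤ] [∀ n : ℤ, (shiftFunctor D n).Additive] [Pretriangulated D]

/-- An object `F` admits a cone decomposition with the given list of components. -/
inductive ConeDecomp : D → List D → Prop
  | nil {F : D} (h : IsZero F) : ConeDecomp F []
  | step {X : D} (F : D) {l : List D} (A : D) (hX : ConeDecomp X l)
      (f : X ⟶ F) (g : F ⟶ A) (h : A ⟶ X⟦(1 : ℤ)⟧)
      (ht : Triangle.mk f g h ∈ distTriang D) : ConeDecomp F (l ++ [A])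

open scoped Classical in
/-- The categorical complexity `δ_t(E,F)`. -/
noncomputable def catDelta [HasBinaryBiproducts D] (t : ℝ) (E F : D) : ℝ≥0∞ :=
  if IsZero F then 0
  else sInf {x : ℝ≥0∞ | ∃ (ns : List ℤ) (F' : D),
      ns ≠ [] ∧ ConeDecomp (F ⊞ F') (ns.map fun n => E⟦n⟧) ∧
      x = (ns.map fun n => ENNReal.ofReal (Real.exp ((n : ℝ) * t))).sum}

/-- Objects split-generated by `G`. -/
inductive SplitGen (G : D) : D → Prop
  | self : SplitGen G G
  | zero {X : D} (h : IsZero X) : SplitGen G X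
  | ofIso {X Y : D} (e : X ≅ Y) (h : SplitGen G X) : SplitGen G Y
  | shift {X : D} (n : ℤ) (h : SplitGen G X) : SplitGen G (X⟦n⟧)
  | cone₂ {X Y Z : D} (f : X ⟶ Y) (g : Y ⟶ Z) (h : Z ⟶ X⟦(1 : ℤ)⟧)
      (ht : Triangle.mk f g h ∈ distTriang D) (hX : SplitGen G X) (hZ : SplitGen G Z) :
      SplitGen G Y
  | summand {X Y : D} (s : X ⟶ Y) (p : Y ⟶ X) (hsp : s ≫ p = 𝟙 X)
      (h : SplitGen G Y) : SplitGen G X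

/-- `G` is a split-generator. -/
def IsSplitGenerator (G : D) : Prop := ∀ X : D, SplitGen G X

lemma ConeDecomp.ofIso' {F F' : D} (e : F ≅ F') {l : List D} (h : ConeDecomp F l) :
    ConeDecomp F' l := by
  cases h with
  | nil h => exact .nil (h.of_iso e.symm)
  | step F A hX f g hh ht =>
      refine .step F' A hX (f ≫ e.hom) (e.inv ≫ g) hh ?_
      refine isomorphic_distinguished _ ht _ ?_
      exact Triangle.isoMk _ _ (Iso.refl _) e.symm (Iso.refl _) (by exact (by simp : (f ≫ e.hom) ≫ e.inv = 𝟙 _ ≫ f)) (by exact (by simp : (e.inv ≫ g) ≫ 𝟙 A = e.inv ≫ g)) (by exact (by simp : hh ≫ (shiftFunctor D (1:ℤ)).map (𝟙 _) = 𝟙 A ≫ hh))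

lemma catDelta_le_of_summand [HasBinaryBiproducts D] (t : ℝ) (G : D) {E C F : D}
    (hE : ¬ IsZero E) (e : F ≅ C ⊞ E) : catDelta t G E ≤ catDelta t G F := by
  have hF : ¬ IsZero F := by
    intro h
    apply hE
    have h' : IsZero (C ⊞ E) := h.of_iso e.symm
    rw [IsZero.iff_id_eq_zero]
    have h1 : (biprod.inr : E ⟶ C ⊞ E) ≫ biprod.snd = 𝟙 E := by simp
    have h2 : (biprod.inr : E ⟶ C ⊞ E) = 0 := h'.eq_of_tgt _ _
    rw [← h1, h2, zero_comp]
  unfold catDelta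
  rw [if_neg hE, if_neg hF]
  apply sInf_le_sInf
  rintro x ⟨ns, F', hne, hcd, rfl⟩
  refine ⟨ns, F' ⊞ C, hne, hcd.ofIso' ?_, rfl⟩
  exact biprod.mapIso e (Iso.refl F') ≪≫ biprod.associator C E F' ≪≫
    biprod.braiding C (E ⊞ F') ≪≫ biprod.associator E F' C

noncomputable def iterObjBiprodIso [HasBinaryBiproducts D] (T : D ⥤ D) [T.Additive] (G E : D)
    (eE : T.obj E ≅ E) : ∀ n : ℕ, (T.obj)^[n] (G ⊞ E) ≅ ((T.obj)^[n] G) ⊞ E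
  | 0 => Iso.refl _
  | n + 1 => by
      have : Limits.PreservesBinaryBiproducts T :=
        Limits.preservesBinaryBiproducts_of_preservesBiproducts T
      rw [Function.iterate_succ_apply', Function.iterate_succ_apply']
      exact T.mapIso (iterObjBiprodIso T G E eE n) ≪≫ T.mapBiprod _ _ ≪≫
        biprod.mapIso (Iso.refl _) eE

lemma SplitGen.trans' {H G X : D} (hG : SplitGen H G) (h : SplitGen G X) : SplitGen H X := by
  induction h with
  | self => exact hG
  | zero h => exact .zero h
  | ofIso e _ ih => exact .ofIso e ih
  | shift n _ ih => exact .shift n ih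
  | cone₂ f g hh ht _ _ ihX ihZ => exact .cone₂ f g hh ht ihX ihZ
  | summand s p hsp _ ih => exact .summand s p hsp ih

/-- Theorem 1.7(2): if the twist fixes a nonzero object `E`, then `h_t(T_S) ≥ 0`. -/
theorem twist_entropy_nonneg [HasBinaryBiproducts D]
    (T : D ⥤ D) [T.CommShift ℤ] [T.IsTriangulated] [T.IsEquivalence]
    (G : D) (hG : IsSplitGenerator G)
    (E : D) (hE : ¬ IsZero E) (eE : T.obj E ≅ E)
    (t : ℝ) (hδ : 0 < catDelta t G E) :
    IsSplitGenerator (G ⊞ E) ∧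
    (0 : EReal) ≤ liminf (fun n : ℕ => ((n : ℝ)⁻¹ : EReal) *
        ENNReal.log (catDelta t G ((T.obj)^[n] (G ⊞ E)))) atTop := by
  constructor
  · intro X
    exact SplitGen.trans' (SplitGen.summand biprod.inl biprod.fst (by simp) SplitGen.self) (hG X)
  · set δ := catDelta t G E with hδdef
    have key : ∀ n : ℕ, δ ≤ catDelta t G ((T.obj)^[n] (G ⊞ E)) := fun n =>
      catDelta_le_of_summand t G hE (iterObjBiprodIso T G E eE n)
    have hmono : ∀ n : ℕ, ((n : ℝ)⁻¹ : EReal) * ENNReal.log δ ≤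
        ((n : ℝ)⁻¹ : EReal) * ENNReal.log (catDelta t G ((T.obj)^[n] (G ⊞ E))) := fun n =>
      mul_le_mul_of_nonneg_left (ENNReal.log_monotone (key n))
        (EReal.coe_nonneg.2 (by positivity))
    refine le_trans ?_ (liminf_le_liminf (Eventually.of_forall hmono))
    rcases eq_or_ne (ENNReal.log δ) ⊤ with htop | htop
    · refine le_liminf_of_le (by isBoundedDefault) ?_
      filter_upwards [eventually_ge_atTop 1] with n hn
      rw [htop, EReal.mul_top_of_pos]
      · exact le_top
      · exact EReal.coe_pos.2 (by positivity)
    · have hbot : ENNReal.log δ ≠ ⊥ := by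
        simpa [ENNReal.log_eq_bot_iff] using hδ.ne'
      obtain ⟨c, hc⟩ : ∃ c : ℝ, ENNReal.log δ = (c : EReal) :=
        ⟨(ENNReal.log δ).toReal, (EReal.coe_toReal htop hbot).symm⟩
      have htend : Tendsto (fun n : ℕ => ((n : ℝ)⁻¹ : EReal) * ENNReal.log δ)
          atTop (nhds (0 : EReal)) := by
        simp only [hc, ← EReal.coe_inv, ← EReal.coe_mul, ← EReal.coe_zero]
        rw [EReal.tendsto_coe]
        simpa using tendsto_inv_atTop_nhds_zero_nat.mul_const c
      rw [htend.liminf_eq]
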